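/- (Theorem 2.4) Let a, b be odd positive integers, h ∈ ℤ, r ≥ 1, n ≥ 0, x real. With S_{n,i,q}^{(h,r)}(a) = \sum_{j_1,...,j_r=0}^{a-1} (-1)^{j_1+...+j_r} q^{\sum_{l=1}^r (h+n-l-i+1) j_l} [j_1+...+j_r]_q^i, one has [2]_{q^b}^r \sum_{i=0}^n \binom{n}{i} [a]_q^{n-i} [b]_q^i E_{n-i,q^a}^{(h,r)}(bx) S_{n,i,q^b}^{(h,r)}(a) = [2]_{q^a}^r \sum_{i=0}^n \binom{n}{i} [b]_q^{n-i} [a]_q^i E_{n-i,q^b}^{(h,r)}(ax) S_{n,i,q^a}^{(h,r)}(b). -/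

import Mathlib

noncomputable def qnum (q x : ℝ) : ℝ := (1 - q ^ x) / (1 - q)

/-- The q-number of a natural number: `[a]_q = (1-q^a)/(1-q)`. -/
noncomputable def qnat (q : ℝ) (a : ℕ) : ℝ := (1 - q ^ a) / (1 - q)

/-- The (h,q)-extension of higher-order Euler polynomials, by the finite closed formula. -/
noncomputable def qE (q : ℝ) (h : ℤ) (r n : ℕ) (x : ℝ) : ℝ :=
  (1 + q) ^ r / (1 - q) ^ n *
    ∑ l ∈ Finset.range (n + 1), (n.choose l : ℝ) * (-(q ^ x)) ^ l /
      ∏ j ∈ Finset.range r, (1 + q ^ (h - r + l + 1 + j))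

/-- `S_{n,i,q}^{(h,r)}(a) = ∑_{j_1,…,j_r=0}^{a-1} (-1)^{j_1+⋯+j_r}
q^{∑_{l=1}^r (h+n-l-i+1) j_l} [j_1+⋯+j_r]_q^i`. -/
noncomputable def qS (q : ℝ) (h : ℤ) (r n i a : ℕ) : ℝ :=
  ∑ j : Fin r → Fin a,
    (-1 : ℝ) ^ (∑ l, (j l : ℕ)) *
      q ^ (∑ l : Fin r, (h + n - (l : ℕ) - i) * (j l : ℤ)) *
      (qnat q (∑ l, (j l : ℕ))) ^ i

lemma pz (q : ℝ) (hq : 0 < q) (c : ℕ) (e : ℤ) : (q ^ c) ^ e = q ^ ((c:ℤ) * e) := by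
  rw [← Real.rpow_natCast q c, ← Real.rpow_intCast _ e, ← Real.rpow_mul hq.le,
    ← Real.rpow_intCast q]
  push_cast; ring_nf

lemma pr (q : ℝ) (hq : 0 < q) (c : ℕ) (y : ℝ) : (q ^ c) ^ y = q ^ ((c:ℝ) * y) := by
  rw [← Real.rpow_natCast q c, ← Real.rpow_mul hq.le]

noncomputable def Dm (q : ℝ) (h : ℤ) (r c l : ℕ) : ℝ :=
  ∏ j ∈ Finset.range r, (1 + q ^ ((c:ℤ) * (h - (r:ℤ) + (l:ℤ) + 1 + (j:ℤ))))

lemma qE_pow (q : ℝ) (hq0 : 0 < q) (hq1 : q < 1) (h : ℤ) (r m a : ℕ) (ha : 0 < a) (y : ℝ) :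
    qnat q a ^ m * qE (q ^ a) h r m y
    = (1 + q^a)^r / (1-q)^m *
      ∑ l ∈ Finset.range (m+1), (m.choose l : ℝ) * (-(q ^ ((a:ℝ) * y)))^l / Dm q h r a l := by
  have hqa : q ^ a < 1 := pow_lt_one₀ hq0.le hq1 ha.ne'
  have h1a : (0:ℝ) < 1 - q ^ a := by linarith
  have h1q : (1:ℝ) - q ≠ 0 := by intro hc; nlinarith [sub_eq_zero.mp hc]
  unfold qE qnat
  have hsum : ∑ l ∈ Finset.range (m+1), ((m.choose l : ℝ) * (-((q^a) ^ y)) ^ l /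
        ∏ j ∈ Finset.range r, (1 + (q^a) ^ (h - r + l + 1 + j)))
      = ∑ l ∈ Finset.range (m+1), (m.choose l : ℝ) * (-(q ^ ((a:ℝ) * y)))^l / Dm q h r a l := by
    apply Finset.sum_congr rfl
    intro l _
    rw [pr q hq0 a y]
    congr 1
    unfold Dm
    apply Finset.prod_congr rfl
    intro j _
    rw [pz q hq0 a _]
  rw [hsum, ← mul_assoc]
  congr 1
  rw [div_pow]
  field_simp

lemma qS_pow (q : ℝ) (hq0 : 0 < q) (hq1 : q < 1) (h : ℤ) (r n i a b : ℕ) (hb : 0 < b) :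
    qnat q b ^ i * qS (q ^ b) h r n i a
    = ∑ j : Fin r → Fin a,
        (-1 : ℝ) ^ (∑ l, (j l : ℕ)) *
          q ^ ((b:ℤ) * (∑ l : Fin r, (h + n - (l : ℕ) - i) * (j l : ℤ))) *
          ((1 - q ^ (b * (∑ l, (j l : ℕ)))) / (1 - q)) ^ i := by
  have hqb : q ^ b < 1 := pow_lt_one₀ hq0.le hq1 hb.ne'
  have h1b : (1:ℝ) - q ^ b ≠ 0 := by intro hc; nlinarith [sub_eq_zero.mp hc]
  have h1q : (1:ℝ) - q ≠ 0 := by intro hc; nlinarith [sub_eq_zero.mp hc]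
  unfold qS
  rw [Finset.mul_sum]
  apply Finset.sum_congr rfl
  intro j _
  rw [pz q hq0 b _]
  have key : qnat q b * qnat (q ^ b) (∑ l, (j l : ℕ))
      = (1 - q ^ (b * (∑ l, (j l : ℕ)))) / (1 - q) := by
    unfold qnat
    rw [← pow_mul]
    field_simp
  calc qnat q b ^ i * ((-1:ℝ) ^ (∑ l, (j l : ℕ)) * q ^ ((b:ℤ) * (∑ l : Fin r, (h + n - (l : ℕ) - i) * (j l : ℤ))) * qnat (q^b) (∑ l, (j l : ℕ)) ^ i)
      = (-1:ℝ) ^ (∑ l, (j l : ℕ)) * q ^ ((b:ℤ) * (∑ l : Fin r, (h + n - (l : ℕ) - i) * (j l : ℤ))) * (qnat q b * qnat (q^b) (∑ l, (j l : ℕ))) ^ i := by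
        rw [mul_pow]; ring
    _ = _ := by rw [key]

lemma zz (q : ℝ) (hq : 0 < q) (e f : ℤ) : (q ^ e) ^ f = q ^ (e * f) := by
  rw [← Real.rpow_intCast q e, ← Real.rpow_intCast _ f, ← Real.rpow_mul hq.le,
    ← Real.rpow_intCast q (e*f)]
  push_cast; ring_nf

lemma zp (q : ℝ) (hq : 0 < q) (e : ℤ) (c : ℕ) : (q ^ e) ^ c = q ^ (e * (c:ℤ)) := by
  rw [← zpow_natCast (q ^ e) c, zz q hq]

lemma zpow_sum' (q : ℝ) (hq : q ≠ 0) {ι : Type*} (s : Finset ι) (f : ι → ℤ) :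
    q ^ (∑ i ∈ s, f i) = ∏ i ∈ s, q ^ f i := by
  classical
  induction s using Finset.induction with
  | empty => simp
  | @insert c s hx ih => rw [Finset.sum_insert hx, Finset.prod_insert hx, zpow_add₀ hq, ih]

lemma geom_odd (t : ℝ) (ht : 0 < t) {a : ℕ} (hodd : Odd a) :
    ∑ j ∈ Finset.range a, (-t) ^ j = (1 + t ^ a) / (1 + t) := by
  have h1 : (-t) ≠ 1 := by nlinarith
  have h2 : (1 : ℝ) + t ≠ 0 := by positivity
  have h3 : (-t) - 1 ≠ 0 := by intro hc; apply h2; linarith [sub_eq_zero.mp hc]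
  rw [geom_sum_eq h1, hodd.neg_pow, div_eq_div_iff h3 h2]
  ring

lemma reflectD (q : ℝ) (h : ℤ) (r c l : ℕ) :
    ∏ l' ∈ Finset.range r, (1 + q ^ ((c:ℤ) * (h + (l:ℤ) - (l':ℤ)))) = Dm q h r c l := by
  unfold Dm
  rw [← Finset.prod_range_reflect (fun j => 1 + q ^ ((c:ℤ) * (h - (r:ℤ) + (l:ℤ) + 1 + (j:ℤ)))) r]
  apply Finset.prod_congr rfl
  intro j hj
  rw [Finset.mem_range] at hj
  congr 2
  have : ((r - 1 - j : ℕ) : ℤ) = (r:ℤ) - 1 - (j:ℤ) := by omega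
  rw [this]
  ring

lemma jsum (q : ℝ) (hq0 : 0 < q) (h : ℤ) (r a b n l : ℕ) (haodd : Odd a) :
    ∑ j : Fin r → Fin a,
      ((-1:ℝ) ^ (∑ l', (j l' : ℕ)) *
        q ^ ((b:ℤ) * (∑ l' : Fin r, (h + (n:ℤ) - ((l' : ℕ):ℤ)) * ((j l' : ℕ):ℤ))) *
        (q ^ (b * (∑ l', (j l' : ℕ)))) ^ (-((n:ℤ) - (l:ℤ))))
    = Dm q h r (a*b) l / Dm q h r b l := by
  have hqne : q ≠ 0 := hq0.ne'
  have step1 : ∀ j : Fin r → Fin a,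
      (-1:ℝ) ^ (∑ l', (j l' : ℕ)) *
        q ^ ((b:ℤ) * (∑ l' : Fin r, (h + (n:ℤ) - ((l' : ℕ):ℤ)) * ((j l' : ℕ):ℤ))) *
        (q ^ (b * (∑ l', (j l' : ℕ)))) ^ (-((n:ℤ) - (l:ℤ)))
      = ∏ l' : Fin r, (-(q ^ ((b:ℤ) * (h + (l:ℤ) - ((l' : ℕ):ℤ))))) ^ ((j l' : ℕ)) := by
    intro j
    rw [pz q hq0 (b * (∑ l', (j l' : ℕ))) (-((n:ℤ) - (l:ℤ)))]
    rw [mul_assoc, ← zpow_add₀ hqne]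
    have hexp : (b:ℤ) * (∑ l' : Fin r, (h + (n:ℤ) - ((l' : ℕ):ℤ)) * ((j l' : ℕ):ℤ))
          + ((b * (∑ l', (j l' : ℕ)) : ℕ) : ℤ) * (-((n:ℤ) - (l:ℤ)))
        = ∑ l' : Fin r, ((b:ℤ) * (h + (l:ℤ) - ((l' : ℕ):ℤ))) * ((j l' : ℕ):ℤ) := by
      push_cast
      rw [Finset.mul_sum, Finset.mul_sum, Finset.sum_mul, ← Finset.sum_add_distrib]
      apply Finset.sum_congr rfl
      intro l' _
      ring
    rw [hexp, zpow_sum' q hqne]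
    have : ∀ l' : Fin r, q ^ (((b:ℤ) * (h + (l:ℤ) - ((l' : ℕ):ℤ))) * ((j l' : ℕ):ℤ))
        = (q ^ ((b:ℤ) * (h + (l:ℤ) - ((l' : ℕ):ℤ)))) ^ ((j l' : ℕ)) := by
      intro l'; rw [zp q hq0]
    rw [Finset.prod_congr rfl (fun l' _ => this l')]
    rw [← Finset.prod_pow_eq_pow_sum, ← Finset.prod_mul_distrib]
    apply Finset.prod_congr rfl
    intro l' _
    rw [← mul_pow, neg_one_mul]
  rw [Finset.sum_congr rfl (fun j _ => step1 j)]
  have step2 := Finset.prod_univ_sum (fun _ : Fin r => (Finset.univ : Finset (Fin a)))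
      (fun l' v => (-(q ^ ((b:ℤ) * (h + (l:ℤ) - ((l' : ℕ):ℤ))))) ^ ((v : ℕ)))
  rw [Fintype.piFinset_univ] at step2
  rw [← step2]
  have step3 : ∀ l' : Fin r,
      ∑ v : Fin a, (-(q ^ ((b:ℤ) * (h + (l:ℤ) - ((l' : ℕ):ℤ))))) ^ ((v : ℕ))
      = (1 + q ^ (((a*b : ℕ):ℤ) * (h + (l:ℤ) - ((l' : ℕ):ℤ)))) /
        (1 + q ^ ((b:ℤ) * (h + (l:ℤ) - ((l' : ℕ):ℤ)))) := by
    intro l'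
    set e : ℤ := (b:ℤ) * (h + (l:ℤ) - ((l' : ℕ):ℤ)) with he
    have ht : (0:ℝ) < q ^ e := zpow_pos hq0 e
    rw [Fin.sum_univ_eq_sum_range (fun v => (-(q ^ e)) ^ v) a, geom_odd _ ht haodd]
    congr 2
    rw [zp q hq0]
    congr 1
    push_cast
    ring
  rw [Finset.prod_congr rfl (fun l' _ => step3 l'), Finset.prod_div_distrib]
  rw [Fin.prod_univ_eq_prod_range (fun l' => 1 + q ^ (((a*b:ℕ):ℤ) * (h + (l:ℤ) - ((l':ℕ):ℤ)))) r]
  rw [Fin.prod_univ_eq_prod_range (fun l' => 1 + q ^ ((b:ℤ) * (h + (l:ℤ) - ((l':ℕ):ℤ)))) r]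
  rw [reflectD, reflectD]

lemma collapse (n l : ℕ) (hl : l ≤ n) (u : ℝ) (hu : u ≠ 0) :
    ∑ i ∈ Finset.range (n+1), (n.choose i : ℝ) * ((n-i).choose l : ℝ) * (u ^ (-(i:ℤ)) * (1-u) ^ i)
    = (n.choose l : ℝ) * u ^ (-((n:ℤ) - (l:ℤ))) := by
  have key : ∀ i : ℕ, u ^ (-(i:ℤ)) * (1-u) ^ i = ((1-u)/u) ^ i := by
    intro i
    rw [div_pow, zpow_neg, zpow_natCast, inv_mul_eq_div]
  simp only [key]
  rw [← Finset.sum_subset (Finset.range_subset_range.mpr (show n - l + 1 ≤ n + 1 by omega))]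
  · have h1 : ∀ i ∈ Finset.range (n - l + 1),
        (n.choose i : ℝ) * ((n-i).choose l : ℝ) * ((1-u)/u) ^ i
        = (n.choose l : ℝ) * (((n-l).choose i : ℝ) * ((1-u)/u) ^ i) := by
      intro i hi
      rw [Finset.mem_range] at hi
      have : (n.choose i) * ((n - i).choose l) = (n.choose l) * ((n - l).choose i) := by
        have h1 := Nat.choose_mul (n := n) (show i ≤ i + l by omega)
        have h2 := Nat.choose_mul (n := n) (show l ≤ i + l by omega)
        have hs : (i+l).choose i = (i+l).choose l := by
          rw [← Nat.choose_symm (show i ≤ i + l by omega)]; congr 1; omega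
        have e1 : i + l - i = l := by omega
        have e2 : i + l - l = i := by omega
        rw [e1] at h1; rw [e2] at h2
        rw [← h1, ← h2, hs]
      have this' : ((n.choose i * ((n-i).choose l) : ℕ) : ℝ) = ((n.choose l * ((n-l).choose i) : ℕ) : ℝ) := by rw [this]
      push_cast at this'
      rw [this']; ring
    rw [Finset.sum_congr rfl h1, ← Finset.mul_sum]
    congr 1
    have hadd := add_pow ((1-u)/u) 1 (n - l)
    simp only [one_pow, mul_one] at hadd
    rw [Finset.sum_congr rfl (fun i _ => by ring : ∀ i ∈ Finset.range (n-l+1), ((((n-l).choose i : ℝ)) * ((1-u)/u) ^ i = ((1-u)/u) ^ i * (((n-l).choose i : ℝ)))), ← hadd]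
    have : (1-u)/u + 1 = 1/u := by field_simp; ring
    rw [this, div_pow, one_pow, one_div, ← zpow_natCast u (n-l), ← zpow_neg]
    congr 1
    omega
  · intro i hi hni
    rw [Finset.mem_range] at hi hni
    have : (n - i).choose l = 0 := Nat.choose_eq_zero_of_lt (by omega)
    rw [this]
    push_cast
    ring

lemma Dm_pos (q : ℝ) (hq : 0 < q) (h : ℤ) (r c l : ℕ) : 0 < Dm q h r c l := by
  unfold Dm
  apply Finset.prod_pos
  intro j _
  have := zpow_pos hq ((c:ℤ) * (h - (r:ℤ) + (l:ℤ) + 1 + (j:ℤ)))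
  linarith

lemma side (q : ℝ) (hq0 : 0 < q) (hq1 : q < 1) (r : ℕ) (h : ℤ) (n : ℕ) (x : ℝ)
    (a b : ℕ) (ha : 0 < a) (hb : 0 < b) (haodd : Odd a) :
    (1 + q ^ b) ^ r *
        ∑ i ∈ Finset.range (n + 1),
          (n.choose i : ℝ) * (qnat q a) ^ (n - i) * (qnat q b) ^ i *
            qE (q ^ a) h r (n - i) ((b : ℝ) * x) * qS (q ^ b) h r n i a
    = (1+q^a)^r * (1+q^b)^r / (1-q)^n *
      ∑ l ∈ Finset.range (n+1), (n.choose l : ℝ) * (-(q ^ ((a:ℝ) * ((b:ℝ) * x))))^l *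
        Dm q h r (a*b) l / (Dm q h r a l * Dm q h r b l) := by
  have hqne : q ≠ 0 := hq0.ne'
  have h1q : (1:ℝ) - q ≠ 0 := by intro hc; nlinarith [sub_eq_zero.mp hc]
  have step1 : ∀ i ∈ Finset.range (n+1),
      (n.choose i : ℝ) * (qnat q a) ^ (n - i) * (qnat q b) ^ i *
          qE (q ^ a) h r (n - i) ((b : ℝ) * x) * qS (q ^ b) h r n i a
      = (1+q^a)^r / (1-q)^n *
          ∑ l ∈ Finset.range (n+1), ∑ j : Fin r → Fin a,
            ((n.choose i : ℝ) * (((n-i).choose l : ℝ))) *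
              ((q ^ (b * (∑ l', (j l' : ℕ)))) ^ (-(i:ℤ)) * (1 - q ^ (b * (∑ l', (j l' : ℕ)))) ^ i) *
              (((-(q ^ ((a:ℝ) * ((b:ℝ) * x))))^l / Dm q h r a l) *
               ((-1:ℝ) ^ (∑ l', (j l' : ℕ)) *
                 q ^ ((b:ℤ) * (∑ l' : Fin r, (h + (n:ℤ) - ((l':ℕ):ℤ)) * ((j l' : ℕ):ℤ))))) := by
    intro i hi
    rw [Finset.mem_range, Nat.lt_succ_iff] at hi
    have hpow : ((1:ℝ)-q)^(n-i) * (1-q)^i = (1-q)^n := by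
      rw [← pow_add]; congr 1; omega
    have hsplit : ∀ j : Fin r → Fin a,
        q ^ ((b:ℤ) * (∑ l' : Fin r, (h + (n:ℤ) - ((l':ℕ):ℤ) - (i:ℤ)) * ((j l' : ℕ):ℤ)))
        = q ^ ((b:ℤ) * (∑ l' : Fin r, (h + (n:ℤ) - ((l':ℕ):ℤ)) * ((j l' : ℕ):ℤ))) *
          (q ^ (b * (∑ l', (j l' : ℕ)))) ^ (-(i:ℤ)) := by
      intro j
      rw [pz q hq0, ← zpow_add₀ hqne]
      congr 1
      push_cast
      rw [Finset.mul_sum, Finset.mul_sum, Finset.mul_sum, Finset.sum_mul,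
        ← Finset.sum_add_distrib]
      apply Finset.sum_congr rfl
      intro l' _
      ring
    rw [show (n.choose i : ℝ) * (qnat q a) ^ (n - i) * (qnat q b) ^ i *
          qE (q ^ a) h r (n - i) ((b : ℝ) * x) * qS (q ^ b) h r n i a
        = (n.choose i : ℝ) * ((qnat q a) ^ (n - i) * qE (q ^ a) h r (n - i) ((b : ℝ) * x)) *
          ((qnat q b) ^ i * qS (q ^ b) h r n i a) from by ring]
    rw [qE_pow q hq0 hq1 h r (n-i) a ha ((b:ℝ)*x), qS_pow q hq0 hq1 h r n i a b hb]
    -- extend the l-range from n-i+1 to n+1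
    have hext : ∑ l ∈ Finset.range (n-i+1),
          ((n-i).choose l : ℝ) * (-(q ^ ((a:ℝ)*((b:ℝ)*x))))^l / Dm q h r a l
        = ∑ l ∈ Finset.range (n+1),
          ((n-i).choose l : ℝ) * (-(q ^ ((a:ℝ)*((b:ℝ)*x))))^l / Dm q h r a l := by
      apply Finset.sum_subset (Finset.range_subset_range.mpr (by omega))
      intro l _ hl
      rw [Finset.mem_range] at hl
      have : (n-i).choose l = 0 := Nat.choose_eq_zero_of_lt (by omega)
      rw [this]
      simp
    rw [hext]
    rw [mul_assoc, mul_assoc, Finset.sum_mul_sum]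
    rw [Finset.mul_sum, Finset.mul_sum, Finset.mul_sum]
    apply Finset.sum_congr rfl
    intro l _
    rw [Finset.mul_sum, Finset.mul_sum, Finset.mul_sum]
    apply Finset.sum_congr rfl
    intro j _
    rw [hsplit j, div_pow]
    field_simp
    rw [← hpow]
    ring
  rw [Finset.sum_congr rfl step1, ← Finset.mul_sum, Finset.sum_comm]
  have inner : ∀ l ∈ Finset.range (n+1),
      (∑ i ∈ Finset.range (n+1), ∑ j : Fin r → Fin a,
        ((n.choose i : ℝ) * (((n-i).choose l : ℝ))) *
          ((q ^ (b * (∑ l', (j l' : ℕ)))) ^ (-(i:ℤ)) * (1 - q ^ (b * (∑ l', (j l' : ℕ)))) ^ i) *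
          (((-(q ^ ((a:ℝ) * ((b:ℝ) * x))))^l / Dm q h r a l) *
           ((-1:ℝ) ^ (∑ l', (j l' : ℕ)) *
             q ^ ((b:ℤ) * (∑ l' : Fin r, (h + (n:ℤ) - ((l':ℕ):ℤ)) * ((j l' : ℕ):ℤ))))))
      = (n.choose l : ℝ) * ((-(q ^ ((a:ℝ) * ((b:ℝ) * x))))^l / Dm q h r a l) *
          (Dm q h r (a*b) l / Dm q h r b l) := by
    intro l hl
    rw [Finset.mem_range, Nat.lt_succ_iff] at hl
    rw [Finset.sum_comm]
    have hcol : ∀ j : Fin r → Fin a,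
        (∑ i ∈ Finset.range (n+1),
          ((n.choose i : ℝ) * (((n-i).choose l : ℝ))) *
            ((q ^ (b * (∑ l', (j l' : ℕ)))) ^ (-(i:ℤ)) * (1 - q ^ (b * (∑ l', (j l' : ℕ)))) ^ i) *
            (((-(q ^ ((a:ℝ) * ((b:ℝ) * x))))^l / Dm q h r a l) *
             ((-1:ℝ) ^ (∑ l', (j l' : ℕ)) *
               q ^ ((b:ℤ) * (∑ l' : Fin r, (h + (n:ℤ) - ((l':ℕ):ℤ)) * ((j l' : ℕ):ℤ))))))
        = ((n.choose l : ℝ) * (q ^ (b * (∑ l', (j l' : ℕ)))) ^ (-((n:ℤ)-(l:ℤ)))) *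
            (((-(q ^ ((a:ℝ) * ((b:ℝ) * x))))^l / Dm q h r a l) *
             ((-1:ℝ) ^ (∑ l', (j l' : ℕ)) *
               q ^ ((b:ℤ) * (∑ l' : Fin r, (h + (n:ℤ) - ((l':ℕ):ℤ)) * ((j l' : ℕ):ℤ))))) := by
      intro j
      rw [← Finset.sum_mul]
      rw [collapse n l hl _ (by positivity)]
    rw [Finset.sum_congr rfl (fun j _ => hcol j)]
    rw [← jsum q hq0 h r a b n l haodd, Finset.mul_sum]
    apply Finset.sum_congr rfl
    intro j _
    ring
  rw [Finset.sum_congr rfl inner, ← mul_assoc]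
  congr 1
  · ring
  apply Finset.sum_congr rfl
  intro l _
  have hDa : Dm q h r a l ≠ 0 := (Dm_pos q hq0 h r a l).ne'
  have hDb : Dm q h r b l ≠ 0 := (Dm_pos q hq0 h r b l).ne'
  field_simp

theorem qE_qS_symmetry (q : ℝ) (hq0 : 0 < q) (hq1 : q < 1) (r : ℕ) (hr : 0 < r)
    (h : ℤ) (hhr : (r : ℤ) ≤ h) (n : ℕ) (x : ℝ)
    (a b : ℕ) (ha : 0 < a) (hb : 0 < b) (haodd : Odd a) (hbodd : Odd b) :
    (1 + q ^ b) ^ r *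
        ∑ i ∈ Finset.range (n + 1),
          (n.choose i : ℝ) * (qnat q a) ^ (n - i) * (qnat q b) ^ i *
            qE (q ^ a) h r (n - i) ((b : ℝ) * x) * qS (q ^ b) h r n i a =
      (1 + q ^ a) ^ r *
        ∑ i ∈ Finset.range (n + 1),
          (n.choose i : ℝ) * (qnat q b) ^ (n - i) * (qnat q a) ^ i *
            qE (q ^ b) h r (n - i) ((a : ℝ) * x) * qS (q ^ a) h r n i b := by
  rw [side q hq0 hq1 r h n x a b ha hb haodd,
      side q hq0 hq1 r h n x b a hb ha hbodd,
      ← mul_assoc, ← mul_assoc]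
  congr 1
  · ring
  apply Finset.sum_congr rfl
  intro l _
  rw [mul_comm (b:ℝ) (a:ℝ), Nat.mul_comm b a]
  ring
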